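/- arXiv:2402.08148 — 5 statements merged into one kernel-verified Lean document; each statement's English description precedes it below -/
import Mathlib

section
/- Suppose J : ℝⁿ × ℝ → ℝ is continuously differentiable, Ω ⊆ ℝⁿ, U ⊆ ℝᵐ, t₀ ≤ T, and J satisfies the dissipation inequality ∂ₜJ(x,t) + c(x,u,t) + ⟨∇ₓJ(x,t), f(x,u)⟩ ≥ 0 for all (x,u,t) ∈ Ω × U × [t₀,T], together with the boundary inequality J(x,T) ≤ g(x) for all x ∈ Ω. Let u : [t₀,T] → U be measurable and let x̃ : [t₀,T] → Ω be a C¹ solution of ẋ̃(t) = f(x̃(t), u(t)) with x̃(t₀) = x₀ ∈ Ω. Then J(x₀, t₀) ≤ ∫_{t₀}^{T} c(x̃(t), u(t), t) dt + g(x̃(T)). -/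
open MeasureTheory Set

/-- Proposition 1 (trajectory-wise version): if C¹ `J` satisfies the relaxed HJB
inequalities, then along any admissible trajectory
`J(x₀,t₀) ≤ ∫ c + g(x̃(T))`.  Here `∂ₜJ(x,t) + ⟨∇ₓJ(x,t), v⟩` is written as
`fderiv ℝ J (x,t) (v,1)`. -/
theorem sub_value_trajectory {n m : ℕ}
    (J : ((Fin n → ℝ) × ℝ) → ℝ) (hJ : ContDiff ℝ 1 J)
    (c : (Fin n → ℝ) → (Fin m → ℝ) → ℝ → ℝ) (hc : Continuous fun p : (Fin n → ℝ) × (Fin m → ℝ) × ℝ => c p.1 p.2.1 p.2.2)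
    (g : (Fin n → ℝ) → ℝ)
    (f : (Fin n → ℝ) → (Fin m → ℝ) → (Fin n → ℝ))
    (hf : Continuous fun p : (Fin n → ℝ) × (Fin m → ℝ) => f p.1 p.2)
    (Ω : Set (Fin n → ℝ)) (U : Set (Fin m → ℝ)) (t₀ T : ℝ) (ht : t₀ ≤ T)
    (hdiss : ∀ x ∈ Ω, ∀ u ∈ U, ∀ t ∈ Icc t₀ T,
      0 ≤ fderiv ℝ J (x, t) (f x u, 1) + c x u t)
    (hbdry : ∀ x ∈ Ω, J (x, T) ≤ g x)
    (u : ℝ → Fin m → ℝ) (hu : Measurable u) (huU : ∀ t ∈ Icc t₀ T, u t ∈ U)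
    (x₀ : Fin n → ℝ) (hx₀ : x₀ ∈ Ω)
    (xt : ℝ → Fin n → ℝ) (hinit : xt t₀ = x₀) (hxΩ : ∀ t ∈ Icc t₀ T, xt t ∈ Ω)
    (hode : ∀ t ∈ Icc t₀ T, HasDerivAt xt (f (xt t) (u t)) t)
    (hint : IntervalIntegrable (fun t => c (xt t) (u t) t) volume t₀ T) :
    J (x₀, t₀) ≤ (∫ t in t₀..T, c (xt t) (u t) t) + g (xt T) := by
  set φ : ℝ → ℝ := fun t => J (xt t, t) with hφ
  have hderiv : ∀ t ∈ Icc t₀ T,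
      HasDerivAt φ (fderiv ℝ J (xt t, t) (f (xt t) (u t), 1)) t := by
    intro t htI
    have h1 : HasDerivAt (fun s => (xt s, s)) (f (xt t) (u t), 1) t :=
      (hode t htI).prodMk (hasDerivAt_id t)
    exact ((hJ.differentiable one_ne_zero).differentiableAt.hasFDerivAt).comp_hasDerivAt t h1
  have hcont : ContinuousOn φ (Icc t₀ T) := fun t htI =>
    ((hderiv t htI).continuousAt).continuousWithinAt
  have key : (∫ s in t₀..T, -c (xt s) (u s) s) ≤ φ T - φ t₀ := by
    apply intervalIntegral.integral_le_sub_of_hasDeriv_right_of_le ht hcont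
      (g' := fun s => fderiv ℝ J (xt s, s) (f (xt s) (u s), 1))
      (fun s hs => (hderiv s (Ioo_subset_Icc_self hs)).hasDerivWithinAt)
      (((intervalIntegrable_iff_integrableOn_Icc_of_le ht).1 hint).neg)
    intro s hs
    have hsI := Ioo_subset_Icc_self hs
    have := hdiss (xt s) (hxΩ s hsI) (u s) (huU s hsI) s hsI
    simp only [Pi.neg_apply]
    linarith
  rw [intervalIntegral.integral_neg] at key
  have hb := hbdry (xt T) (hxΩ T ⟨ht, le_rfl⟩)
  have : φ t₀ = J (x₀, t₀) := by rw [hφ]; simp [hinit]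
  rw [this] at key
  linarith [key]
end

section
/- Under the hypotheses of the previous statement, if V(x₀,t₀) denotes the infimum over all admissible pairs (u, x̃) (measurable u : [t₀,T] → U with C¹ trajectory x̃ remaining in Ω, x̃(t₀)=x₀) of ∫_{t₀}^{T} c(x̃(t),u(t),t) dt + g(x̃(T)), then J(x₀,t₀) ≤ V(x₀,t₀) for every x₀ ∈ Ω and t₀ ∈ [0,T]. -/
open MeasureTheory Set

/-- An admissible pair for the OCP: measurable control with values in `U`, and a C¹
trajectory of `ẋ = f(x,u)` starting at `x₀` and remaining in `Ω`, whose running cost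
is integrable. -/
def AdmissiblePair {n m : ℕ} (f : (Fin n → ℝ) → (Fin m → ℝ) → (Fin n → ℝ))
    (c : (Fin n → ℝ) → (Fin m → ℝ) → ℝ → ℝ)
    (Ω : Set (Fin n → ℝ)) (U : Set (Fin m → ℝ)) (t₀ T : ℝ) (x₀ : Fin n → ℝ)
    (u : ℝ → Fin m → ℝ) (x : ℝ → Fin n → ℝ) : Prop :=
  Measurable u ∧ (∀ t ∈ Icc t₀ T, u t ∈ U) ∧ (∀ t ∈ Icc t₀ T, x t ∈ Ω) ∧
    x t₀ = x₀ ∧ (∀ t ∈ Icc t₀ T, HasDerivAt x (f (x t) (u t)) t) ∧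
    IntervalIntegrable (fun t => c (x t) (u t) t) volume t₀ T

/-- The value function as an `EReal`-valued infimum over admissible pairs
(`+∞` if no admissible pair exists). -/
noncomputable def ValueFn {n m : ℕ} (f : (Fin n → ℝ) → (Fin m → ℝ) → (Fin n → ℝ))
    (c : (Fin n → ℝ) → (Fin m → ℝ) → ℝ → ℝ) (g : (Fin n → ℝ) → ℝ)
    (Ω : Set (Fin n → ℝ)) (U : Set (Fin m → ℝ)) (t₀ T : ℝ) (x₀ : Fin n → ℝ) : EReal :=
  sInf {y : EReal | ∃ u x, AdmissiblePair f c Ω U t₀ T x₀ u x ∧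
    y = (((∫ t in t₀..T, c (x t) (u t) t) + g (x T) : ℝ) : EReal)}

/-- Proposition 1: a C¹ function satisfying the relaxed HJB inequalities is a
sub-value function: `J(x₀,t₀) ≤ V(x₀,t₀)` for every `x₀ ∈ Ω`, `t₀ ∈ [0,T]`. -/
theorem sub_value_function {n m : ℕ}
    (J : ((Fin n → ℝ) × ℝ) → ℝ) (hJ : ContDiff ℝ 1 J)
    (c : (Fin n → ℝ) → (Fin m → ℝ) → ℝ → ℝ)
    (hc : Continuous fun p : (Fin n → ℝ) × (Fin m → ℝ) × ℝ => c p.1 p.2.1 p.2.2)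
    (g : (Fin n → ℝ) → ℝ)
    (f : (Fin n → ℝ) → (Fin m → ℝ) → (Fin n → ℝ))
    (hf : Continuous fun p : (Fin n → ℝ) × (Fin m → ℝ) => f p.1 p.2)
    (Ω : Set (Fin n → ℝ)) (U : Set (Fin m → ℝ)) (T : ℝ) (hT : 0 ≤ T)
    (hdiss : ∀ x ∈ Ω, ∀ u ∈ U, ∀ t ∈ Icc (0:ℝ) T,
      0 ≤ fderiv ℝ J (x, t) (f x u, 1) + c x u t)
    (hbdry : ∀ x ∈ Ω, J (x, T) ≤ g x) :
    ∀ x₀ ∈ Ω, ∀ t₀ ∈ Icc (0:ℝ) T,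
      (J (x₀, t₀) : EReal) ≤ ValueFn f c g Ω U t₀ T x₀ := by
  intro x₀ hx₀ t₀ ht₀
  refine le_sInf ?_
  rintro y ⟨u, x, ⟨hu_meas, hu_mem, hx_mem, hx0, hx_deriv, hc_int⟩, rfl⟩
  rw [EReal.coe_le_coe_iff]
  have ht₀T : t₀ ≤ T := ht₀.2
  -- the composed function
  set φ : ℝ → ℝ := fun t => J (x t, t) with hφ
  have hxcont : ContinuousOn x (Icc t₀ T) := fun t ht =>
    ((hx_deriv t ht).continuousAt).continuousWithinAt
  have hφcont : ContinuousOn φ (Icc t₀ T) :=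
    hJ.continuous.comp_continuousOn (hxcont.prodMk continuousOn_id)
  have hφderiv : ∀ t ∈ Ioo t₀ T,
      HasDerivAt φ (fderiv ℝ J (x t, t) (f (x t) (u t), 1)) t := by
    intro t ht
    have htI : t ∈ Icc t₀ T := ⟨ht.1.le, ht.2.le⟩
    have hF : HasDerivAt (fun s => (x s, s)) (f (x t) (u t), (1:ℝ)) t :=
      (hx_deriv t htI).prodMk (hasDerivAt_id t)
    have hJd : HasFDerivAt J (fderiv ℝ J (x t, t)) (x t, t) :=
      (hJ.differentiable one_ne_zero (x t, t)).hasFDerivAt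
    exact hJd.comp_hasDerivAt (f := fun s => (x s, s)) t hF
  have hcIcc : IntegrableOn (fun t => c (x t) (u t) t) (Icc t₀ T) volume :=
    (intervalIntegrable_iff_integrableOn_Icc_of_le ht₀T).mp hc_int
  have key : (∫ t in t₀..T, -(c (x t) (u t) t)) ≤ φ T - φ t₀ := by
    refine intervalIntegral.integral_le_sub_of_hasDeriv_right_of_le ht₀T hφcont
      (fun t ht => (hφderiv t ht).hasDerivWithinAt) hcIcc.neg ?_
    intro t ht
    have htI : t ∈ Icc t₀ T := ⟨ht.1.le, ht.2.le⟩
    have ht0T : t ∈ Icc (0:ℝ) T := ⟨ht₀.1.trans htI.1, htI.2⟩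
    have := hdiss (x t) (hx_mem t htI) (u t) (hu_mem t htI) t ht0T
    linarith
  rw [intervalIntegral.integral_neg] at key
  have hTmem : T ∈ Icc t₀ T := ⟨ht₀T, le_rfl⟩
  have hb : J (x T, T) ≤ g (x T) := hbdry (x T) (hx_mem T hTmem)
  have hφt₀ : φ t₀ = J (x₀, t₀) := by rw [hφ]; simp [hx0]
  have hφT : φ T = J (x T, T) := rfl
  linarith [key, hb]
end

section
/- Suppose V ∈ C¹(ℝⁿ × ℝ, ℝ) satisfies the HJB equation with attained infimum as above, V(x,T) = g(x) for all x, and k : ℝⁿ × [t₀,T] → U is a measurable selection with k(x,t) ∈ argmin_{u∈U} { c(x,u,t) + ⟨∇ₓV(x,t), f(x,u)⟩ }. Let x* : [t₀,T] → ℝⁿ be a C¹ solution of ẋ*(t) = f(x*(t), k(x*(t),t)) with x*(t₀) = x₀, and set u*(t) = k(x*(t),t). Then ∫_{t₀}^{T} c(x*(t), u*(t), t) dt + g(x*(T)) = V(x₀, t₀). -/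
open MeasureTheory Set

/-- Verification theorem (closed-loop identity): if C¹ `V` solves the HJB PDE with
attained infimum, `V(·,T) = g`, `k` is a measurable argmin selection, and `x*` is a
C¹ closed-loop trajectory from `x₀`, then the closed-loop cost equals `V(x₀,t₀)`. -/
theorem verification_closed_loop {n m : ℕ}
    (V : ((Fin n → ℝ) × ℝ) → ℝ) (hV : ContDiff ℝ 1 V)
    (c : (Fin n → ℝ) → (Fin m → ℝ) → ℝ → ℝ)
    (hc : Continuous fun p : (Fin n → ℝ) × (Fin m → ℝ) × ℝ => c p.1 p.2.1 p.2.2)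
    (g : (Fin n → ℝ) → ℝ)
    (f : (Fin n → ℝ) → (Fin m → ℝ) → (Fin n → ℝ))
    (hf : Continuous fun p : (Fin n → ℝ) × (Fin m → ℝ) => f p.1 p.2)
    (U : Set (Fin m → ℝ)) (hU : U.Nonempty) (t₀ T : ℝ) (ht : t₀ ≤ T)
    (k : (Fin n → ℝ) → ℝ → Fin m → ℝ)
    (hkmeas : Measurable fun p : (Fin n → ℝ) × ℝ => k p.1 p.2)
    (hk : ∀ x : Fin n → ℝ, ∀ t ∈ Icc t₀ T, k x t ∈ U ∧
      (∀ u ∈ U, c x (k x t) t + fderiv ℝ V (x, t) (f x (k x t), 0)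
          ≤ c x u t + fderiv ℝ V (x, t) (f x u, 0)) ∧
      fderiv ℝ V (x, t) (0, 1) + (c x (k x t) t + fderiv ℝ V (x, t) (f x (k x t), 0)) = 0)
    (hbdry : ∀ x : Fin n → ℝ, V (x, T) = g x)
    (x₀ : Fin n → ℝ) (xs : ℝ → Fin n → ℝ) (hinit : xs t₀ = x₀)
    (hode : ∀ t ∈ Icc t₀ T, HasDerivAt xs (f (xs t) (k (xs t) t)) t)
    (hint : IntervalIntegrable (fun t => c (xs t) (k (xs t) t) t) volume t₀ T) :
    (∫ t in t₀..T, c (xs t) (k (xs t) t) t) + g (xs T) = V (x₀, t₀) := by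
  have hderiv : ∀ t ∈ uIcc t₀ T,
      HasDerivAt (fun t => V (xs t, t)) (-(c (xs t) (k (xs t) t) t)) t := by
    intro t htI
    rw [uIcc_of_le ht] at htI
    have hpair : HasDerivAt (fun t => (xs t, t)) (f (xs t) (k (xs t) t), 1) t :=
      (hode t htI).prodMk (hasDerivAt_id t)
    have hdV : HasFDerivAt V (fderiv ℝ V (xs t, t)) (xs t, t) :=
      (hV.differentiable one_ne_zero (xs t, t)).hasFDerivAt
    have hcomp : HasDerivAt (fun t => V (xs t, t))
        (fderiv ℝ V (xs t, t) (f (xs t) (k (xs t) t), 1)) t :=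
      hdV.comp_hasDerivAt_of_eq t hpair rfl
    have hsum : (f (xs t) (k (xs t) t), (1:ℝ)) =
        (f (xs t) (k (xs t) t), (0:ℝ)) + ((0 : Fin n → ℝ), (1:ℝ)) := by
      simp [Prod.ext_iff]
    have heq : fderiv ℝ V (xs t, t) (f (xs t) (k (xs t) t), 1)
        = -(c (xs t) (k (xs t) t) t) := by
      rw [hsum, map_add]
      have h3 := (hk (xs t) t htI).2.2
      linarith
    rw [heq] at hcomp
    exact hcomp
  have hint' : IntervalIntegrable (fun t => -(c (xs t) (k (xs t) t) t)) volume t₀ T :=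
    hint.neg
  have h := intervalIntegral.integral_eq_sub_of_hasDerivAt hderiv hint'
  rw [intervalIntegral.integral_neg] at h
  rw [hinit] at h
  rw [hbdry (xs T)] at h
  linarith
end

section
/- Under the hypotheses of the verification theorem above, the control u*(t) = k(x*(t),t) is optimal: for any other admissible pair (u, x̃) with u : [t₀,T] → U measurable, x̃ a C¹ solution of ẋ̃ = f(x̃, u) with x̃(t₀) = x₀, one has ∫_{t₀}^{T} c(x*(t),u*(t),t) dt + g(x*(T)) ≤ ∫_{t₀}^{T} c(x̃(t),u(t),t) dt + g(x̃(T)). -/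
open MeasureTheory Set

/-- Verification theorem (optimality): under the hypotheses of the verification
theorem, the closed-loop control `u*(t) = k(x*(t),t)` is optimal: its cost is no
larger than that of any other admissible pair `(u, x̃)`. -/
theorem verification_optimality {n m : ℕ}
    (V : ((Fin n → ℝ) × ℝ) → ℝ) (hV : ContDiff ℝ 1 V)
    (c : (Fin n → ℝ) → (Fin m → ℝ) → ℝ → ℝ)
    (hc : Continuous fun p : (Fin n → ℝ) × (Fin m → ℝ) × ℝ => c p.1 p.2.1 p.2.2)
    (g : (Fin n → ℝ) → ℝ)
    (f : (Fin n → ℝ) → (Fin m → ℝ) → (Fin n → ℝ))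
    (hf : Continuous fun p : (Fin n → ℝ) × (Fin m → ℝ) => f p.1 p.2)
    (U : Set (Fin m → ℝ)) (hU : U.Nonempty) (t₀ T : ℝ) (ht : t₀ ≤ T)
    (k : (Fin n → ℝ) → ℝ → Fin m → ℝ)
    (hkmeas : Measurable fun p : (Fin n → ℝ) × ℝ => k p.1 p.2)
    (hk : ∀ x : Fin n → ℝ, ∀ t ∈ Icc t₀ T, k x t ∈ U ∧
      (∀ u ∈ U, c x (k x t) t + fderiv ℝ V (x, t) (f x (k x t), 0)
          ≤ c x u t + fderiv ℝ V (x, t) (f x u, 0)) ∧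
      fderiv ℝ V (x, t) (0, 1) + (c x (k x t) t + fderiv ℝ V (x, t) (f x (k x t), 0)) = 0)
    (hbdry : ∀ x : Fin n → ℝ, V (x, T) = g x)
    (x₀ : Fin n → ℝ) (xs : ℝ → Fin n → ℝ) (hinit : xs t₀ = x₀)
    (hode : ∀ t ∈ Icc t₀ T, HasDerivAt xs (f (xs t) (k (xs t) t)) t)
    (hint : IntervalIntegrable (fun t => c (xs t) (k (xs t) t) t) volume t₀ T)
    -- any other admissible pair (u, x̃):
    (u : ℝ → Fin m → ℝ) (hu : Measurable u) (huU : ∀ t ∈ Icc t₀ T, u t ∈ U)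
    (xt : ℝ → Fin n → ℝ) (hinit' : xt t₀ = x₀)
    (hode' : ∀ t ∈ Icc t₀ T, HasDerivAt xt (f (xt t) (u t)) t)
    (hint' : IntervalIntegrable (fun t => c (xt t) (u t) t) volume t₀ T) :
    (∫ t in t₀..T, c (xs t) (k (xs t) t) t) + g (xs T)
      ≤ (∫ t in t₀..T, c (xt t) (u t) t) + g (xt T) := by
  -- Derivative of t ↦ V (γ t, t) along a trajectory
  have chain : ∀ (y : ℝ → Fin n → ℝ) (w : ℝ → Fin m → ℝ), ∀ t ∈ Icc t₀ T,
      HasDerivAt y (f (y t) (w t)) t →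
      HasDerivAt (fun s => V (y s, s)) (fderiv ℝ V (y t, t) (f (y t) (w t), 1)) t := by
    intro y w t htI hy
    have h1 : HasDerivAt (fun s => (y s, s)) ((f (y t) (w t), 1) : (Fin n → ℝ) × ℝ) t :=
      hy.prodMk (hasDerivAt_id t)
    have h2 : HasFDerivAt V (fderiv ℝ V (y t, t)) (y t, t) :=
      (hV.differentiable one_ne_zero (y t, t)).hasFDerivAt
    exact HasFDerivAt.comp_hasDerivAt (f := fun s => (y s, s)) t h2 h1
  have split : ∀ (p : (Fin n → ℝ) × ℝ) (v : Fin n → ℝ),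
      fderiv ℝ V p (v, 1) = fderiv ℝ V p (v, 0) + fderiv ℝ V p (0, 1) := by
    intro p v
    have : ((v, 1) : (Fin n → ℝ) × ℝ) = (v, 0) + (0, 1) := by simp
    rw [this, map_add]
  -- Closed-loop identity: ∫ c(xs) = V(x₀,t₀) - g(xs T)
  have hcl : (∫ t in t₀..T, -c (xs t) (k (xs t) t) t) = V (xs T, T) - V (xs t₀, t₀) := by
    apply intervalIntegral.integral_eq_sub_of_hasDerivAt
    · intro t htI
      rw [uIcc_of_le ht] at htI
      have hd := chain xs (fun s => k (xs s) s) t htI (hode t htI)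
      have hhjb := (hk (xs t) t htI).2.2
      have : fderiv ℝ V (xs t, t) (f (xs t) (k (xs t) t), 1)
          = -c (xs t) (k (xs t) t) t := by
        rw [split]; linarith
      rwa [this] at hd
    · exact hint.neg
  -- Sub-value inequality for (u, xt)
  have hsub : (∫ t in t₀..T, -c (xt t) (u t) t) ≤ V (xt T, T) - V (xt t₀, t₀) := by
    have hcont : ContinuousOn (fun s => V (xt s, s)) (Icc t₀ T) := by
      intro t htI
      exact ((chain xt u t htI (hode' t htI)).continuousAt).continuousWithinAt
    refine intervalIntegral.integral_le_sub_of_hasDeriv_right_of_le ht hcont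
      (g' := fun t => fderiv ℝ V (xt t, t) (f (xt t) (u t), 1))
      (fun t htI => ?_) ?_ (fun t htI => ?_)
    · exact (chain xt u t (Ioo_subset_Icc_self htI) (hode' t (Ioo_subset_Icc_self htI))).hasDerivWithinAt
    · exact (intervalIntegrable_iff_integrableOn_Icc_of_le ht).mp hint'.neg
    · have htI' := Ioo_subset_Icc_self htI
      have hmin := (hk (xt t) t htI').2.1 (u t) (huU t htI')
      have hhjb := (hk (xt t) t htI').2.2
      show -c (xt t) (u t) t ≤ fderiv ℝ V (xt t, t) (f (xt t) (u t), 1)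
      rw [split]
      linarith
  have hT : V (xs T, T) = g (xs T) := hbdry _
  have hT' : V (xt T, T) = g (xt T) := hbdry _
  rw [intervalIntegral.integral_neg] at hcl hsub
  rw [hinit] at hcl
  rw [hinit'] at hsub
  linarith
end

section
/- Combining the two previous results: if P is feasible for the SOS program (i.e., admits the SOS certificates above), then P(x₀,t₀) ≤ V(x₀,t₀) for every x₀ with ‖x₀‖₂ ≤ R, where V is the value function of the OCP with state constraint Ω = {x : ‖x‖₂ ≤ R}, input set U = [-1,1]ᵐ, polynomial data c, g, f, and horizon [t₀,T]. -/
open MeasureTheory Set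

noncomputable section

/-- A function is a sum of squares. -/
def IsSumSq' {α : Type*} (q : α → ℝ) : Prop :=
  ∃ (N : ℕ) (p : Fin N → α → ℝ), ∀ y, q y = ∑ i, (p i y) ^ 2

/-- Admissible pair with state constrained to `Ω`, including integrability of the
running cost along the trajectory. -/
def AdmPair {n m : ℕ} (f : EuclideanSpace ℝ (Fin n) → (Fin m → ℝ) → EuclideanSpace ℝ (Fin n))
    (c : EuclideanSpace ℝ (Fin n) → (Fin m → ℝ) → ℝ → ℝ)
    (Ω : Set (EuclideanSpace ℝ (Fin n))) (U : Set (Fin m → ℝ)) (t₀ T : ℝ)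
    (x₀ : EuclideanSpace ℝ (Fin n))
    (u : ℝ → Fin m → ℝ) (x : ℝ → EuclideanSpace ℝ (Fin n)) : Prop :=
  Measurable u ∧ (∀ t ∈ Icc t₀ T, u t ∈ U) ∧ (∀ t ∈ Icc t₀ T, x t ∈ Ω) ∧
    x t₀ = x₀ ∧ (∀ t ∈ Icc t₀ T, HasDerivAt x (f (x t) (u t)) t) ∧
    IntervalIntegrable (fun t => c (x t) (u t) t) volume t₀ T

/-- The `EReal`-valued value function (`+∞` if no admissible pair exists). -/
def VF {n m : ℕ} (f : EuclideanSpace ℝ (Fin n) → (Fin m → ℝ) → EuclideanSpace ℝ (Fin n))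
    (c : EuclideanSpace ℝ (Fin n) → (Fin m → ℝ) → ℝ → ℝ) (g : EuclideanSpace ℝ (Fin n) → ℝ)
    (Ω : Set (EuclideanSpace ℝ (Fin n))) (U : Set (Fin m → ℝ)) (t₀ T : ℝ)
    (x₀ : EuclideanSpace ℝ (Fin n)) : EReal :=
  sInf {y : EReal | ∃ u x, AdmPair f c Ω U t₀ T x₀ u x ∧
    y = (((∫ t in t₀..T, c (x t) (u t) t) + g (x T) : ℝ) : EReal)}

/-- If `P` is feasible for the SOS program, then `P` is a sub-value function of the
state-constrained OCP on the closed ball of radius `R` with `U = [-1,1]^m`. -/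
theorem sos_feasible_sub_value {n m : ℕ}
    (P : (EuclideanSpace ℝ (Fin n) × ℝ) → ℝ) (hP : ContDiff ℝ 1 P)
    (c : EuclideanSpace ℝ (Fin n) → (Fin m → ℝ) → ℝ → ℝ)
    (hc : Continuous fun p : EuclideanSpace ℝ (Fin n) × (Fin m → ℝ) × ℝ => c p.1 p.2.1 p.2.2)
    (g : EuclideanSpace ℝ (Fin n) → ℝ)
    (f : EuclideanSpace ℝ (Fin n) → (Fin m → ℝ) → EuclideanSpace ℝ (Fin n))
    (hf : Continuous fun p : EuclideanSpace ℝ (Fin n) × (Fin m → ℝ) => f p.1 p.2)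
    (R t₀ T : ℝ) (ht : t₀ ≤ T)
    (k₀ s₀ : EuclideanSpace ℝ (Fin n) → ℝ)
    (k₁ s₁ s₂ : EuclideanSpace ℝ (Fin n) × (Fin m → ℝ) × ℝ → ℝ)
    (s₃ : Fin m → EuclideanSpace ℝ (Fin n) × (Fin m → ℝ) × ℝ → ℝ)
    (hk₀ : IsSumSq' k₀) (hs₀ : IsSumSq' s₀) (hk₁ : IsSumSq' k₁)
    (hs₁ : IsSumSq' s₁) (hs₂ : IsSumSq' s₂) (hs₃ : ∀ i, IsSumSq' (s₃ i))
    (hid₀ : ∀ x, g x - P (x, T) - s₀ x * (R ^ 2 - ‖x‖ ^ 2) = k₀ x)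
    (hid₁ : ∀ x u t, fderiv ℝ P (x, t) (f x u, 1) + c x u t
        - s₁ (x, u, t) * (R ^ 2 - ‖x‖ ^ 2)
        - s₂ (x, u, t) * ((t - t₀) * (T - t))
        - ∑ i, s₃ i (x, u, t) * ((u i + 1) * (1 - u i)) = k₁ (x, u, t)) :
    ∀ x₀ : EuclideanSpace ℝ (Fin n), ‖x₀‖ ≤ R →
      (P (x₀, t₀) : EReal)
        ≤ VF f c g (Metric.closedBall 0 R) {u | ∀ i, u i ∈ Icc (-1:ℝ) 1} t₀ T x₀ := by
  intro x₀ hx₀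
  have sosNN : ∀ {α : Type} (q : α → ℝ), IsSumSq' q → ∀ y, 0 ≤ q y := by
    rintro α q ⟨N, p, hp⟩ y
    rw [hp]; positivity
  refine le_sInf ?_
  rintro y ⟨u, x, ⟨hu_meas, hU, hΩ, hx0, hderiv, hcint⟩, rfl⟩
  -- norm bound on the state
  have hxR : ∀ t ∈ Icc t₀ T, ‖x t‖ ≤ R := by
    intro t htI
    have := hΩ t htI
    rwa [Metric.mem_closedBall, dist_zero_right] at this
  -- terminal bound
  have hterm : ∀ z : EuclideanSpace ℝ (Fin n), ‖z‖ ≤ R → P (z, T) ≤ g z := by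
    intro z hz
    have h0 := hid₀ z
    have h1 : 0 ≤ k₀ z := sosNN k₀ hk₀ z
    have h2 : 0 ≤ s₀ z := sosNN s₀ hs₀ z
    have h3 : 0 ≤ R ^ 2 - ‖z‖ ^ 2 := by
      have := pow_le_pow_left₀ (norm_nonneg z) hz 2
      linarith
    nlinarith
  -- Hamiltonian nonnegativity
  have key : ∀ z (v : Fin m → ℝ) t, ‖z‖ ≤ R → (∀ i, v i ∈ Icc (-1:ℝ) 1) → t ∈ Icc t₀ T →
      0 ≤ fderiv ℝ P (z, t) (f z v, 1) + c z v t := by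
    intro z v t hz hv htI
    have h0 := hid₁ z v t
    have h1 : 0 ≤ k₁ (z, v, t) := sosNN k₁ hk₁ _
    have h2 : 0 ≤ s₁ (z, v, t) * (R ^ 2 - ‖z‖ ^ 2) := by
      have := pow_le_pow_left₀ (norm_nonneg z) hz 2
      exact mul_nonneg (sosNN s₁ hs₁ _) (by linarith)
    have h3 : 0 ≤ s₂ (z, v, t) * ((t - t₀) * (T - t)) := by
      refine mul_nonneg (sosNN s₂ hs₂ _) (mul_nonneg ?_ ?_) <;>
        · simp only [Set.mem_Icc] at htI; linarith [htI.1, htI.2]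
    have h4 : 0 ≤ ∑ i, s₃ i (z, v, t) * ((v i + 1) * (1 - v i)) := by
      refine Finset.sum_nonneg fun i _ => mul_nonneg (sosNN (s₃ i) (hs₃ i) _) (mul_nonneg ?_ ?_) <;>
        · have := hv i; simp only [Set.mem_Icc] at this; linarith [this.1, this.2]
    linarith
  set D : ℝ → ℝ := fun t => fderiv ℝ P (x t, t) (f (x t) (u t), 1) with hD_def
  -- derivative of P along trajectory
  have hPC : ∀ t ∈ Icc t₀ T, HasDerivAt (fun t => P (x t, t)) (D t) t := by
    intro t htI
    have h1 : HasDerivAt (fun t => (x t, t)) (f (x t) (u t), 1) t :=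
      (hderiv t htI).prodMk (hasDerivAt_id t)
    have h2 : HasFDerivAt P (fderiv ℝ P (x t, t)) (x t, t) :=
      (hP.differentiable one_ne_zero (x t, t)).hasFDerivAt
    exact HasFDerivAt.comp_hasDerivAt (f := fun s => (x s, s)) t h2 h1
  have hxC : ContinuousOn x (Icc t₀ T) := fun t htI =>
    ((hderiv t htI).continuousAt).continuousWithinAt
  -- measurability of D on [t₀, T]
  set μr := volume.restrict (Icc t₀ T) with hμr
  have hxm : AEMeasurable x μr := hxC.aemeasurable measurableSet_Icc
  have hum : AEMeasurable u μr := hu_meas.aemeasurable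
  have hfm : AEMeasurable (fun t => f (x t) (u t)) μr :=
    hf.measurable.comp_aemeasurable (hxm.prodMk hum)
  have htm : AEMeasurable (fun t => (x t, t)) μr := hxm.prodMk aemeasurable_id
  have hdP : Continuous (fderiv ℝ P) := hP.continuous_fderiv one_ne_zero
  have hpairm : AEMeasurable
      (fun t => (fderiv ℝ P (x t, t), ((f (x t) (u t), (1:ℝ)) :
        EuclideanSpace ℝ (Fin n) × ℝ))) μr :=
    (hdP.measurable.comp_aemeasurable htm).prodMk (hfm.prodMk aemeasurable_const)
  have hDm : AEMeasurable D μr := by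
    have hcont : Continuous fun p :
        ((EuclideanSpace ℝ (Fin n) × ℝ) →L[ℝ] ℝ) × (EuclideanSpace ℝ (Fin n) × ℝ) =>
        p.1 p.2 := isBoundedBilinearMap_apply.continuous
    exact hcont.measurable.comp_aemeasurable hpairm
  -- boundedness of D on [t₀, T]
  have hK : IsCompact (x '' Icc t₀ T) := isCompact_Icc.image_of_continuousOn hxC
  have hUc : IsCompact {v : Fin m → ℝ | ∀ i, v i ∈ Icc (-1:ℝ) 1} := by
    have he : {v : Fin m → ℝ | ∀ i, v i ∈ Icc (-1:ℝ) 1}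
        = Set.pi Set.univ (fun _ => Icc (-1:ℝ) 1) := by
      ext v; simp only [Set.mem_setOf_eq, Set.mem_pi, Set.mem_univ, true_implies]
    rw [he]
    exact isCompact_univ_pi fun _ => isCompact_Icc
  obtain ⟨M₁, hM₁⟩ : ∃ M₁, ∀ p ∈ (x '' Icc t₀ T) ×ˢ {v : Fin m → ℝ | ∀ i, v i ∈ Icc (-1:ℝ) 1},
      ‖f p.1 p.2‖ ≤ M₁ := by
    obtain ⟨M₁, hM₁⟩ := ((hK.prod hUc).image (continuous_norm.comp hf)).bddAbove
    exact ⟨M₁, fun p hp => hM₁ (Set.mem_image_of_mem _ hp)⟩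
  obtain ⟨M₂, hM₂⟩ : ∃ M₂, ∀ p ∈ (x '' Icc t₀ T) ×ˢ Icc t₀ T, ‖fderiv ℝ P p‖ ≤ M₂ := by
    obtain ⟨M₂, hM₂⟩ := ((hK.prod isCompact_Icc).image (continuous_norm.comp hdP)).bddAbove
    exact ⟨M₂, fun p hp => hM₂ (Set.mem_image_of_mem _ hp)⟩
  have hDbound : ∀ t ∈ Icc t₀ T, |D t| ≤ max M₂ 0 * max M₁ 1 := by
    intro t htI
    have hxmem : x t ∈ x '' Icc t₀ T := Set.mem_image_of_mem _ htI
    have hb1 : ‖f (x t) (u t)‖ ≤ M₁ := hM₁ (x t, u t) ⟨hxmem, hU t htI⟩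
    have hb2 : ‖fderiv ℝ P (x t, t)‖ ≤ M₂ := hM₂ (x t, t) ⟨hxmem, htI⟩
    have hle : |D t| ≤ ‖fderiv ℝ P (x t, t)‖ * ‖((f (x t) (u t), (1:ℝ)) :
        EuclideanSpace ℝ (Fin n) × ℝ)‖ := (fderiv ℝ P (x t, t)).le_opNorm _
    have hnp : ‖((f (x t) (u t), (1:ℝ)) : EuclideanSpace ℝ (Fin n) × ℝ)‖ ≤ max M₁ 1 := by
      rw [Prod.norm_def]
      exact max_le_max hb1 (by simp)
    calc |D t| ≤ ‖fderiv ℝ P (x t, t)‖ * ‖((f (x t) (u t), (1:ℝ)) :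
          EuclideanSpace ℝ (Fin n) × ℝ)‖ := hle
      _ ≤ max M₂ 0 * max M₁ 1 := by
          apply mul_le_mul (le_trans hb2 (le_max_left _ _)) hnp (norm_nonneg _)
          exact le_max_right _ _
  have hDi : IntervalIntegrable D volume t₀ T := by
    rw [intervalIntegrable_iff_integrableOn_Icc_of_le ht]
    refine Integrable.mono' (integrable_const (max M₂ 0 * max M₁ 1))
      hDm.aestronglyMeasurable ?_
    filter_upwards [ae_restrict_mem measurableSet_Icc] with t htI
    simpa using hDbound t htI
  -- FTC
  have hftc : ∫ t in t₀..T, D t = P (x T, T) - P (x t₀, t₀) := by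
    refine intervalIntegral.integral_eq_sub_of_hasDerivAt (fun t htu => hPC t ?_) hDi
    rwa [Set.uIcc_of_le ht] at htu
  -- comparison
  have hmono : ∫ t in t₀..T, (-(c (x t) (u t) t)) ≤ ∫ t in t₀..T, D t := by
    refine intervalIntegral.integral_mono_on ht hcint.neg hDi fun t htI => ?_
    have := key (x t) (u t) t (hxR t htI) (hU t htI) htI
    linarith
  rw [intervalIntegral.integral_neg] at hmono
  have hTmem : T ∈ Icc t₀ T := ⟨ht, le_rfl⟩
  have hg : P (x T, T) ≤ g (x T) := hterm (x T) (hxR T hTmem)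
  have hfinal : P (x₀, t₀) ≤ (∫ t in t₀..T, c (x t) (u t) t) + g (x T) := by
    rw [hx0] at hftc
    linarith
  exact EReal.coe_le_coe_iff.mpr hfinal

end
end
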